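/- Let r : ℝ → ℝ be locally integrable with r(u) ≥ 0 for all u, and set B(t,T) := exp(∫_t^T r(u) du). Let T0 < T1 ≤ τ ≤ T2 be real numbers and let s1 ≥ s2 ≥ 0 be real numbers. Then (s1 − s2)·∫_{T0}^{T1} B(t,T2) dt − s2·∫_{T1}^{τ} B(t,T2) dt ≥ (s1·(T1 − T0) − s2·(T2 − T0))·B(T1,T2). -/
import Mathlib


open MeasureTheory

/-- Key inequality in the proof of the No-arbitrage condition for continuously paid CDS
spreads, with nonnegative short rate `r` and accrual factor `B(t,T) = exp(∫_t^T r)`. -/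
theorem stmt_1
    (r : ℝ → ℝ) (hr : LocallyIntegrable r) (hr0 : ∀ u, 0 ≤ r u)
    (B : ℝ → ℝ → ℝ) (hB : ∀ t T, B t T = Real.exp (∫ u in t..T, r u))
    (T0 T1 τ T2 : ℝ) (h01 : T0 < T1) (h1τ : T1 ≤ τ) (hτ2 : τ ≤ T2)
    (s1 s2 : ℝ) (hs : s2 ≤ s1) (hs2 : 0 ≤ s2) :
    (s1 * (T1 - T0) - s2 * (T2 - T0)) * B T1 T2 ≤
      (s1 - s2) * (∫ t in T0..T1, B t T2) - s2 * (∫ t in T1..τ, B t T2) := by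
  have hri : ∀ a b : ℝ, IntervalIntegrable r volume a b := fun a b => by
    rw [intervalIntegrable_iff]
    exact (hr.integrableOn_isCompact isCompact_uIcc).mono_set Set.uIoc_subset_uIcc
  have hcont : Continuous fun t => B t T2 := by
    have h1 : Continuous fun t : ℝ => ∫ u in T2..t, r u :=
      intervalIntegral.continuous_primitive (fun a b => hri a b) T2
    have h2 : Continuous fun t : ℝ => Real.exp (-∫ u in T2..t, r u) :=
      Real.continuous_exp.comp h1.neg
    convert h2 using 1
    funext t
    rw [hB, intervalIntegral.integral_symm]
  have hBpos : 0 < B T1 T2 := by rw [hB]; exact Real.exp_pos _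
  have key1 : ∀ t ∈ Set.Icc T0 T1, B T1 T2 ≤ B t T2 := by
    intro t ht
    rw [hB, hB]
    apply Real.exp_le_exp.2
    have hsplit : (∫ u in t..T2, r u) = (∫ u in t..T1, r u) + ∫ u in T1..T2, r u :=
      (intervalIntegral.integral_add_adjacent_intervals (hri _ _) (hri _ _)).symm
    have h0 : 0 ≤ ∫ u in t..T1, r u :=
      intervalIntegral.integral_nonneg ht.2 (fun u _ => hr0 u)
    linarith [hsplit]
  have key2 : ∀ t ∈ Set.Icc T1 τ, B t T2 ≤ B T1 T2 := by
    intro t ht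
    rw [hB, hB]
    apply Real.exp_le_exp.2
    have hsplit : (∫ u in T1..T2, r u) = (∫ u in T1..t, r u) + ∫ u in t..T2, r u :=
      (intervalIntegral.integral_add_adjacent_intervals (hri _ _) (hri _ _)).symm
    have h0 : 0 ≤ ∫ u in T1..t, r u :=
      intervalIntegral.integral_nonneg ht.1 (fun u _ => hr0 u)
    linarith [hsplit]
  have hi1 : (∫ t in T0..T1, B T1 T2) ≤ ∫ t in T0..T1, B t T2 :=
    intervalIntegral.integral_mono_on h01.le intervalIntegrable_const
      (hcont.intervalIntegrable _ _) key1
  have hi2 : (∫ t in T1..τ, B t T2) ≤ ∫ t in T1..τ, B T1 T2 :=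
    intervalIntegral.integral_mono_on h1τ (hcont.intervalIntegrable _ _)
      intervalIntegrable_const key2
  rw [intervalIntegral.integral_const, smul_eq_mul] at hi1
  rw [intervalIntegral.integral_const, smul_eq_mul] at hi2
  have h1 : (s1 - s2) * ((T1 - T0) * B T1 T2) ≤ (s1 - s2) * ∫ t in T0..T1, B t T2 :=
    mul_le_mul_of_nonneg_left hi1 (by linarith)
  have h2 : s2 * (∫ t in T1..τ, B t T2) ≤ s2 * ((τ - T1) * B T1 T2) :=
    mul_le_mul_of_nonneg_left hi2 hs2
  nlinarith [mul_le_mul_of_nonneg_right (show s2 * (τ - T0) ≤ s2 * (T2 - T0) by nlinarith) hBpos.le]
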